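/- Let α ∈ [0,1]^N, let i_1,…,i_N sort α ascendingly, let D ≤ N, ε2 > 0 with 1/ε2 ∈ ℕ, p = ⌈α_{i_D}/ε2⌉ with α_{i_D} > 0, and define α̃ as in the rounding construction (round the D smallest weights to the nearest grid point c_j = (j−1/2)ε2, 1 ≤ j ≤ p; leave the others unchanged). Define p_k for 0 ≤ k ≤ p + (N − D): p_k = q_k for 0 ≤ k < p (the erasure vectors of the quantization theorem applied to α̃'s grid levels), and for p ≤ k ≤ p + (N−D), p_k(i) = 1 if α_i > α_{i_{k−p+D}} and 0 otherwise. With λ_0 = ε2/2, λ_k = ε2 for 1 ≤ k ≤ p−1, λ_p = α_{i_{D+1}} − (p−1/2)ε2, λ_h = α_{i_{h−p+D+1}} − α_{i_{h−p+D}} for p < h < p + (N−D), and λ_{p+(N−D)} = 1 − α_{i_N}: all λ_k ≥ 0, Σ_k λ_k = 1, and α̃ = Σ_k λ_k p_k. -/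

import Mathlib

set_option maxHeartbeats 2000000 in
/-- Explicit convex decomposition of the rounded weight vector `α̃` as a convex
combination of the binary vectors `p_0, …, p_{p+(N−D)}` (the quantized erasure
patterns followed by threshold indicators of the sorted weights). -/
theorem rounded_weights_convex_decomposition {N D : ℕ}
    (hD : 0 < D) (hDN : D < N)
    (ε2 : ℝ) (hε2 : 0 < ε2) (K : ℕ) (hK : (K : ℝ) * ε2 = 1)
    (α αt : Fin N → ℝ)
    (hα : ∀ i, 0 ≤ α i ∧ α i ≤ 1)
    (σ : Equiv.Perm (Fin N)) (hσ : Monotone (α ∘ σ))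
    (αD : ℝ) (hαD : αD = α (σ ⟨D - 1, by omega⟩)) (hαDpos : 0 < αD)
    (p : ℕ) (hp : p = ⌈αD / ε2⌉₊) (hpK : p ≤ K)
    (hgrid : ((p : ℝ) - 1 / 2) * ε2 ≤ α (σ ⟨D, by omega⟩))
    -- `α̃` rounds the `D` smallest weights to the nearest grid point
    -- `c_j = (j − 1/2)·ε2`, `1 ≤ j ≤ p`, and leaves the others unchanged:
    (hαt : ∀ i, (α i ≤ αD →
        ∃ j : ℕ, 1 ≤ j ∧ j ≤ p ∧ αt i = ((j : ℝ) - 1 / 2) * ε2 ∧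
          ∀ j' : ℕ, 1 ≤ j' → j' ≤ p →
            |((j : ℝ) - 1 / 2) * ε2 - α i| ≤ |((j' : ℝ) - 1 / 2) * ε2 - α i|)
      ∧ (αD < α i → αt i = α i))
    -- the binary vectors `p_k`:
    (pk : ℕ → Fin N → ℝ)
    (hpk_lo : ∀ k, k < p → ∀ j : Fin N,
      pk k (σ j) = if αt (σ j) ≤ (k : ℝ) * ε2 ∧ (j : ℕ) + 1 ≤ D then 0 else 1)
    (hpk_hi : ∀ (k : ℕ) (_hk1 : p ≤ k) (_hk2 : k ≤ p + (N - D)) (i : Fin N),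
      pk k i = if α (σ ⟨k - p + D - 1, by omega⟩) < α i then 1 else 0)
    -- the convex coefficients `λ_k`:
    (l : ℕ → ℝ)
    (hl0 : l 0 = ε2 / 2)
    (hlmid : ∀ k, 1 ≤ k → k ≤ p - 1 → l k = ε2)
    (hlp : l p = α (σ ⟨D, by omega⟩) - ((p : ℝ) - 1 / 2) * ε2)
    (hlh : ∀ (h : ℕ) (_hh1 : p < h) (_hh2 : h < p + (N - D)),
      l h = α (σ ⟨h - p + D, by omega⟩) - α (σ ⟨h - p + D - 1, by omega⟩))
    (hltop : l (p + (N - D)) = 1 - α (σ ⟨N - 1, by omega⟩)) :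
    (∀ k ≤ p + (N - D), 0 ≤ l k) ∧
    (∑ k ∈ Finset.range (p + (N - D) + 1), l k = 1) ∧
    (∀ i, αt i = ∑ k ∈ Finset.range (p + (N - D) + 1), l k * pk k i) := by
  have hp1 : 0 < p := by
    rw [hp]; exact Nat.ceil_pos.mpr (div_pos hαDpos hε2)
  set T := p + (N - D) with hT
  -- sorted weight function on ℕ
  set f : ℕ → ℝ := fun m => α (σ ⟨min m (N - 1), by omega⟩) with hfdef
  have hfmono : Monotone f := by
    intro a b hab
    simp only [hfdef]
    exact hσ (Fin.le_def.mpr (show min a (N - 1) ≤ min b (N - 1) by omega))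
  have hfeq : ∀ m (h : m < N), α (σ ⟨m, h⟩) = f m := by
    intro m h
    simp only [hfdef]
    have : (⟨m, h⟩ : Fin N) = ⟨min m (N - 1), by omega⟩ :=
      Fin.ext (show m = min m (N - 1) by omega)
    rw [this]
  have hfD1 : f (D - 1) = αD := by
    rw [hαD, hfeq (D - 1) (by omega)]
  have hgrid' : ((p : ℝ) - 1 / 2) * ε2 ≤ f D := by
    rw [← hfeq D (by omega)]; exact hgrid
  have hlp' : l p = f D - ((p : ℝ) - 1 / 2) * ε2 := by
    rw [hlp, hfeq D (by omega)]
  have hltop' : l T = 1 - f (N - 1) := by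
    rw [hltop, hfeq (N - 1) (by omega)]
  have hlh' : ∀ h, p < h → h < T → l h = f (h - p + D) - f (h - p + D - 1) := by
    intro h h1 h2
    rw [hlh h h1 h2, hfeq (h - p + D) (by omega), hfeq (h - p + D - 1) (by omega)]
  -- cumulative sums
  set L : ℕ → ℝ := fun k =>
    if k = 0 then 0
    else if k ≤ p then ((k : ℝ) - 1 / 2) * ε2
    else if k ≤ T then f (k - p + D - 1)
    else 1 with hLdef
  have hL0 : L 0 = 0 := by simp [hLdef]
  have hLgrid : ∀ k, 1 ≤ k → k ≤ p → L k = ((k : ℝ) - 1 / 2) * ε2 := by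
    intro k h1 h2; simp only [hLdef]; rw [if_neg (by omega), if_pos h2]
  have hLf : ∀ k, p < k → k ≤ T → L k = f (k - p + D - 1) := by
    intro k h1 h2; simp only [hLdef]
    rw [if_neg (by omega), if_neg (by omega), if_pos h2]
  have hLtop : L (T + 1) = 1 := by
    simp only [hLdef]
    rw [if_neg (by omega), if_neg (by omega), if_neg (by omega)]
  have hLl : ∀ k, k ≤ T → l k = L (k + 1) - L k := by
    intro k hk
    rcases Nat.lt_or_ge k p with hkp | hkp
    · rcases Nat.eq_zero_or_pos k with rfl | hk0
      · rw [hl0, hL0, show 0 + 1 = 1 from rfl, hLgrid 1 le_rfl hp1]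
        ring
      · rw [hlmid k hk0 (by omega), hLgrid (k + 1) (by omega) (by omega),
          hLgrid k (by omega) (by omega)]
        push_cast; ring
    · rcases Nat.eq_or_lt_of_le hkp with rfl | hkp'
      · rw [hlp', hLf (p + 1) (by omega) (by omega),
          show p + 1 - p + D - 1 = D from by omega, hLgrid p hp1 le_rfl]
      · by_cases hkT : k = T
        · subst hkT
          rw [hltop', hLtop, hLf T (by omega) le_rfl,
            show T - p + D - 1 = N - 1 from by omega]
        · rw [hlh' k hkp' (by omega), hLf k hkp' (by omega),
            hLf (k + 1) (by omega) (by omega),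
            show k + 1 - p + D - 1 = k - p + D from by omega]
  have hsum : ∀ c, c ≤ T + 1 → ∑ k ∈ Finset.range c, l k = L c := by
    intro c hc
    rw [Finset.sum_congr rfl
        (fun k hk => hLl k (by simp only [Finset.mem_range] at hk; omega)),
      Finset.sum_range_sub, hL0, sub_zero]
  refine ⟨?_, ?_, ?_⟩
  · -- nonnegativity
    intro k hk
    rcases Nat.lt_or_ge k p with hkp | hkp
    · rcases Nat.eq_zero_or_pos k with rfl | hk0
      · rw [hl0]; positivity
      · rw [hlmid k hk0 (by omega)]; exact hε2.le
    · rcases Nat.eq_or_lt_of_le hkp with rfl | hkp'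
      · rw [hlp']; linarith
      · by_cases hkT : k = T
        · subst hkT
          rw [hltop']
          have h2 : f (N - 1) ≤ 1 := by
            rw [← hfeq (N - 1) (by omega)]; exact (hα _).2
          linarith
        · rw [hlh' k hkp' (by omega)]
          have := hfmono (show k - p + D - 1 ≤ k - p + D by omega)
          linarith
  · -- sums to one
    rw [hsum (T + 1) le_rfl, hLtop]
  · -- decomposition
    intro i
    obtain ⟨j, rfl⟩ : ∃ j, σ j = i := ⟨σ.symm i, Equiv.apply_symm_apply σ i⟩
    obtain ⟨c, hc, hcut, hval⟩ :
        ∃ c, c ≤ T + 1 ∧ (∀ k ≤ T, pk k (σ j) = if k < c then 1 else 0) ∧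
          αt (σ j) = L c := by
      by_cases hjD : (j : ℕ) < D
      · -- small coordinates: rounded to a grid point
        have hjle : α (σ j) ≤ αD := by
          rw [hαD]
          exact hσ (Fin.le_def.mpr (show (j : ℕ) ≤ D - 1 by omega))
        obtain ⟨jj, hjj1, hjjp, hvt, hnear⟩ := (hαt (σ j)).1 hjle
        refine ⟨jj, by omega, ?_, ?_⟩
        · intro k hk
          rcases Nat.lt_or_ge k p with hkp | hkp
          · rw [hpk_lo k hkp j]
            have hcond : (αt (σ j) ≤ (k : ℝ) * ε2 ∧ (j : ℕ) + 1 ≤ D) ↔ ¬ k < jj := by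
              rw [hvt]
              constructor
              · rintro ⟨h1, -⟩ hlt
                have h2 : (jj : ℝ) - 1 / 2 ≤ (k : ℝ) := (mul_le_mul_iff_of_pos_right hε2).mp h1
                have h3 : (k : ℝ) + 1 ≤ (jj : ℝ) := by exact_mod_cast hlt
                linarith
              · intro h
                refine ⟨?_, by omega⟩
                have h2 : (jj : ℝ) ≤ (k : ℝ) := by exact_mod_cast not_lt.mp h
                nlinarith [hε2.le]
            by_cases hklt : k < jj
            · rw [if_pos hklt, if_neg (fun hA => hcond.mp hA hklt)]
            · rw [if_neg hklt, if_pos (hcond.mpr hklt)]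
          · have hmm : α (σ j) ≤ α (σ (⟨k - p + D - 1, by omega⟩ : Fin N)) :=
              hσ (Fin.le_def.mpr (show (j : ℕ) ≤ k - p + D - 1 by omega))
            rw [hpk_hi k hkp (by omega) (σ j), if_neg (not_lt.mpr hmm),
              if_neg (show ¬ k < jj by omega)]
        · rw [hvt, hLgrid jj hjj1 hjjp]
      · -- large coordinates
        have hDj : αD ≤ α (σ j) := by
          rw [hαD]
          exact hσ (Fin.le_def.mpr (show D - 1 ≤ (j : ℕ) by omega))
        have hfj : f (j : ℕ) = α (σ j) := by
          rw [← hfeq (j : ℕ) j.isLt, Fin.eta]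
        have hex : ∃ m, α (σ j) ≤ f (D - 1 + m) := by
          refine ⟨(j : ℕ) - (D - 1), le_of_eq ?_⟩
          rw [show D - 1 + ((j : ℕ) - (D - 1)) = (j : ℕ) from by omega, hfj]
        obtain ⟨t, hft, htmin, htle⟩ :
            ∃ t, α (σ j) ≤ f (D - 1 + t) ∧ (∀ m, m < t → f (D - 1 + m) < α (σ j)) ∧
              t ≤ (j : ℕ) - (D - 1) := by
          refine ⟨Nat.find hex, Nat.find_spec hex,
            fun m hm => not_le.mp (Nat.find_min hex hm), Nat.find_min' hex ?_⟩
          rw [show D - 1 + ((j : ℕ) - (D - 1)) = (j : ℕ) from by omega, hfj]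
        have hjN : (j : ℕ) < N := j.isLt
        have hcT : p + t ≤ T := by omega
        have hfteq : f (D - 1 + t) = α (σ j) :=
          le_antisymm (by rw [← hfj]; exact hfmono (by omega)) hft
        refine ⟨p + t, by omega, ?_, ?_⟩
        · intro k hk
          rcases Nat.lt_or_ge k p with hkp | hkp
          · rw [hpk_lo k hkp j, if_neg (fun hA => absurd hA.2 (by omega)),
              if_pos (by omega)]
          · rw [hpk_hi k hkp (by omega) (σ j)]
            have hfinmk : (⟨k - p + D - 1, by omega⟩ : Fin N)
                = ⟨D - 1 + (k - p), by omega⟩ :=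
              Fin.ext (show k - p + D - 1 = D - 1 + (k - p) by omega)
            rw [hfinmk, hfeq (D - 1 + (k - p)) (by omega)]
            by_cases hkc : k < p + t
            · rw [if_pos (htmin (k - p) (by omega)), if_pos hkc]
            · rw [if_neg (not_lt.mpr (le_trans hft
                  (hfmono (show D - 1 + t ≤ D - 1 + (k - p) by omega)))),
                if_neg hkc]
        · rcases Nat.eq_zero_or_pos t with ht0 | ht1
          · -- α (σ j) = αD : rounds to the top grid point c_p
            have hsj : α (σ j) = αD := by
              rw [← hfD1, ← hfteq, ht0, Nat.add_zero]
            obtain ⟨jj, hjj1, hjjp, hvt, hnear⟩ := (hαt (σ j)).1 (le_of_eq hsj)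
            have hub : αD ≤ (p : ℝ) * ε2 := by
              have h1 := Nat.le_ceil (αD / ε2)
              rw [← hp] at h1
              exact (div_le_iff₀ hε2).mp h1
            have hlb : ((p : ℝ) - 1) * ε2 < αD := by
              have h1 : (⌈αD / ε2⌉₊ : ℝ) < αD / ε2 + 1 :=
                Nat.ceil_lt_add_one (by positivity)
              rw [← hp] at h1
              have h2 : (p : ℝ) - 1 < αD / ε2 := by linarith
              calc ((p : ℝ) - 1) * ε2 < (αD / ε2) * ε2 := (mul_lt_mul_iff_of_pos_right hε2).mpr h2
                _ = αD := by field_simp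
            have hjj : jj = p := by
              by_contra hne
              have hjlt : jj < p := by omega
              have hjjle : (jj : ℝ) + 1 ≤ (p : ℝ) := by exact_mod_cast hjlt
              have hA := hnear p hp1 le_rfl
              rw [hsj] at hA
              have h1 : |((p : ℝ) - 1 / 2) * ε2 - αD| ≤ ε2 / 2 :=
                abs_le.mpr ⟨by linarith, by linarith⟩
              have h2 : αD - ((jj : ℝ) - 1 / 2) * ε2 ≤ |((jj : ℝ) - 1 / 2) * ε2 - αD| := by
                rw [abs_sub_comm]; exact le_abs_self _
              have h3 : ((jj : ℝ) - 1 / 2) * ε2 ≤ ((p : ℝ) - 3 / 2) * ε2 := by nlinarith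
              linarith
            rw [ht0, Nat.add_zero, hvt, hjj]
            exact (hLgrid p hp1 le_rfl).symm
          · -- α (σ j) > αD : untouched by the rounding
            have h0 := htmin 0 ht1
            rw [Nat.add_zero, hfD1] at h0
            rw [(hαt (σ j)).2 h0, hLf (p + t) (by omega) hcT,
              show p + t - p + D - 1 = D - 1 + t from by omega, hfteq]
    have hs1 : ∑ k ∈ Finset.range (T + 1), l k * pk k (σ j)
        = ∑ k ∈ Finset.range (T + 1), (if k < c then l k else 0) := by
      refine Finset.sum_congr rfl fun k hk => ?_
      rw [hcut k (by simp only [Finset.mem_range] at hk; omega)]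
      split_ifs <;> ring
    have hs2 : ∑ k ∈ Finset.range (T + 1), (if k < c then l k else 0)
        = ∑ k ∈ Finset.range c, l k := by
      rw [← Finset.sum_subset (Finset.range_subset_range.mpr hc)
        (fun k _ hk => if_neg (fun hlt => hk (Finset.mem_range.mpr hlt)))]
      exact Finset.sum_congr rfl fun k hk => if_pos (Finset.mem_range.mp hk)
    rw [hs1, hs2, hsum c hc, hval]
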